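/- Fix β > 1, ω > 1, n ∈ ℕ, and r > 0. Set α = (2n+1)π/(βω) and k = ⌈(r + π/(βω))/(2α)⌉, and let S be uniformly distributed on [0,1]. Then for every θ ∈ [−π, π] and every t ∈ [−r, r], 𝔼_S[Γ^cos_n(T_k(t + θ/(βω); α, β); S, ω)] = cos(βωt + θ). -/

import Mathlib

open Real
open scoped BigOperators

/-- The triangle function `T(t; α, β)`: equals `βt` on `[0, α]`, `2αβ - βt` on `(α, 2α]`,
and `0` otherwise. -/
noncomputable def tri (α β t : ℝ) : ℝ :=
  if 0 ≤ t ∧ t ≤ α then β * t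
  else if α < t ∧ t ≤ 2 * α then 2 * α * β - β * t
  else 0

/-- The triangle waveform `T_k(t; α, β) = Σ_{i=-k+1}^{k} T(t - 2α(i-1); α, β)`. -/
noncomputable def triWave (k : ℕ) (α β t : ℝ) : ℝ :=
  ∑ i ∈ Finset.Icc (-(k : ℤ) + 1) (k : ℤ), tri α β (t - 2 * α * ((i : ℝ) - 1))

/-- `ReLU(t) = max(0, t)`. -/
noncomputable def relu (t : ℝ) : ℝ := max 0 t

/-- `R₄(t; S, ω) = ReLU(t) + ReLU(t - π/ω) - ReLU(t - πS/ω) - ReLU(t - π(1-S)/ω)`. -/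
noncomputable def R4 (ω S t : ℝ) : ℝ :=
  relu t + relu (t - π / ω) - relu (t - π * S / ω) - relu (t - π * (1 - S) / ω)

/-- `Γ^sin(t; S, ω) = (πω/2) sin(πS) [R₄(t; S, ω) - R₄(t - π/ω; S, ω)]`. -/
noncomputable def gammaSin (ω S t : ℝ) : ℝ :=
  π * ω / 2 * Real.sin (π * S) * (R4 ω S t - R4 ω S (t - π / ω))

/-- `Γ^cos_n(t; S, ω) = Σ_{i=-n-1}^{n} Γ^sin(t - 2πi/ω + π/(2ω); S, ω)`. -/
noncomputable def gammaCos (n : ℕ) (ω S t : ℝ) : ℝ :=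
  ∑ i ∈ Finset.Icc (-(n : ℤ) - 1) (n : ℤ),
    gammaSin ω S (t - 2 * π * (i : ℝ) / ω + π / (2 * ω))

lemma relu_of_nonpos {t : ℝ} (h : t ≤ 0) : relu t = 0 := max_eq_left h
lemma relu_of_nonneg {t : ℝ} (h : 0 ≤ t) : relu t = t := max_eq_right h
lemma continuous_relu : Continuous relu := continuous_const.max continuous_id

lemma integral_sin_linear (A B a b : ℝ) :
    ∫ s in a..b, Real.sin (π*s) * (A + B*s)
      = (-(A + B*b)*Real.cos (π*b)/π + B*Real.sin (π*b)/π^2)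
        - (-(A + B*a)*Real.cos (π*a)/π + B*Real.sin (π*a)/π^2) := by
  have hπ : (π:ℝ) ≠ 0 := pi_ne_zero
  have key : ∀ s : ℝ, HasDerivAt (fun s => -(A + B*s)*Real.cos (π*s)/π + B*Real.sin (π*s)/π^2)
      (Real.sin (π*s) * (A + B*s)) s := by
    intro s
    have h1 : HasDerivAt (fun s : ℝ => π * s) π s := by
      simpa using (hasDerivAt_id s).const_mul π
    have hcos : HasDerivAt (fun s => Real.cos (π*s)) (-Real.sin (π*s) * π) s :=
      (Real.hasDerivAt_cos (π*s)).comp s h1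
    have hsin : HasDerivAt (fun s => Real.sin (π*s)) (Real.cos (π*s) * π) s :=
      (Real.hasDerivAt_sin (π*s)).comp s h1
    have hlin : HasDerivAt (fun s : ℝ => -(A + B*s)) (-B) s := by
      exact ((hasDerivAt_const s A).add ((hasDerivAt_id s).const_mul B)).neg.congr_deriv (by ring)
    have h := ((hlin.mul hcos).div_const π).add ((hsin.const_mul B).div_const (π^2))
    refine h.congr_deriv ?_
    field_simp
    ring
  rw [intervalIntegral.integral_eq_sub_of_hasDerivAt (fun s _ => key s)
    (Continuous.intervalIntegrable (by continuity) a b)]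

set_option maxHeartbeats 1000000 in
lemma integral_sin_R4 {ω y : ℝ} (hω : 0 < ω) (h0 : 0 ≤ y) (h1 : y ≤ π/ω) :
    ∫ S in (0:ℝ)..1, π*ω/2 * Real.sin (π*S) * R4 ω S y = Real.sin (ω*y) := by
  have hπ : (0:ℝ) < π := pi_pos
  have hωne : ω ≠ 0 := ne_of_gt hω
  have hπne : (π:ℝ) ≠ 0 := pi_ne_zero
  obtain ⟨u, hu⟩ : ∃ u : ℝ, u = y*ω/π := ⟨_, rfl⟩
  have hyω : y*ω ≤ π := by
    have := (le_div_iff₀ hω).mp h1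
    linarith
  have hcu : π/ω * u = y := by rw [hu]; field_simp
  have hπu : π * u = ω * y := by rw [hu]; field_simp
  have hu0 : 0 ≤ u := by rw [hu]; positivity
  have hu1 : u ≤ 1 := by rw [hu]; exact (div_le_one hπ).mpr hyω
  have c1 : Continuous (fun S : ℝ => Real.sin (π*S) * relu (y - π*S/ω)) :=
    (Real.continuous_sin.comp (by continuity)).mul (continuous_relu.comp (by continuity))
  have c2 : Continuous (fun S : ℝ => Real.sin (π*S) * relu (y - π*(1-S)/ω)) :=
    (Real.continuous_sin.comp (by continuity)).mul (continuous_relu.comp (by continuity))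
  have c0 : Continuous (fun S : ℝ => Real.sin (π*S) * (y + 0*S)) :=
    (Real.continuous_sin.comp (by continuity)).mul (by continuity)
  have e1 : ∫ S in (0:ℝ)..1, π*ω/2 * Real.sin (π*S) * R4 ω S y
      = π*ω/2 * ((∫ S in (0:ℝ)..1, Real.sin (π*S) * (y + 0*S))
          - (∫ S in (0:ℝ)..1, Real.sin (π*S) * relu (y - π*S/ω))
          - (∫ S in (0:ℝ)..1, Real.sin (π*S) * relu (y - π*(1-S)/ω))) := by
    rw [← intervalIntegral.integral_sub (c0.intervalIntegrable 0 1) (c1.intervalIntegrable 0 1),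
        ← intervalIntegral.integral_sub ((c0.intervalIntegrable 0 1).sub (c1.intervalIntegrable 0 1)) (c2.intervalIntegrable 0 1),
        ← intervalIntegral.integral_const_mul]
    apply intervalIntegral.integral_congr
    intro S _
    show π*ω/2 * Real.sin (π*S) * R4 ω S y = _
    simp only [R4]
    rw [relu_of_nonneg h0, relu_of_nonpos (show y - π/ω ≤ 0 by linarith)]
    ring
  rw [e1]
  have J0 : (∫ S in (0:ℝ)..1, Real.sin (π*S) * (y + 0*S)) = 2*y/π := by
    rw [integral_sin_linear]
    simp [Real.cos_pi]
    ring
  have J1 : (∫ S in (0:ℝ)..1, Real.sin (π*S) * relu (y - π*S/ω))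
      = y/π - Real.sin (ω*y)/(ω*π) := by
    rw [← intervalIntegral.integral_add_adjacent_intervals (c1.intervalIntegrable 0 u)
        (c1.intervalIntegrable u 1)]
    have eA : (∫ S in (0:ℝ)..u, Real.sin (π*S) * relu (y - π*S/ω))
        = ∫ S in (0:ℝ)..u, Real.sin (π*S) * (y + (-(π/ω))*S) := by
      apply intervalIntegral.integral_congr
      intro S hS
      rw [Set.uIcc_of_le hu0] at hS
      show Real.sin (π*S) * relu (y - π*S/ω) = _
      have he : y - π*S/ω = (ω*y - π*S)/ω := by field_simp
      have : 0 ≤ y - π*S/ω := by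
        rw [he]
        apply div_nonneg ?_ hω.le
        nlinarith [hS.2, hπu]
      rw [relu_of_nonneg this]
      ring
    have eB : (∫ S in u..(1:ℝ), Real.sin (π*S) * relu (y - π*S/ω)) = 0 := by
      have h5 : ∀ S ∈ Set.uIcc u (1:ℝ), Real.sin (π*S) * relu (y - π*S/ω) = 0 := by
        intro S hS
        rw [Set.uIcc_of_le hu1] at hS
        show Real.sin (π*S) * relu (y - π*S/ω) = 0
        have he : y - π*S/ω = (ω*y - π*S)/ω := by field_simp
        have : y - π*S/ω ≤ 0 := by
          rw [he]
          apply div_nonpos_of_nonpos_of_nonneg ?_ hω.le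
          nlinarith [hS.1, hπu]
        rw [relu_of_nonpos this, mul_zero]
      rw [intervalIntegral.integral_congr h5]
      simp
    rw [eA, eB, integral_sin_linear, add_zero]
    have h2 : y + (-(π/ω))*u = 0 := by nlinarith [hcu]
    rw [h2, hπu]
    simp
    field_simp
    ring
  have J2 : (∫ S in (0:ℝ)..1, Real.sin (π*S) * relu (y - π*(1-S)/ω))
      = y/π - Real.sin (ω*y)/(ω*π) := by
    rw [← intervalIntegral.integral_add_adjacent_intervals (c2.intervalIntegrable 0 (1-u))
        (c2.intervalIntegrable (1-u) 1)]
    have eB : (∫ S in (0:ℝ)..(1-u), Real.sin (π*S) * relu (y - π*(1-S)/ω)) = 0 := by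
      have h5 : ∀ S ∈ Set.uIcc (0:ℝ) (1-u), Real.sin (π*S) * relu (y - π*(1-S)/ω) = 0 := by
        intro S hS
        rw [Set.uIcc_of_le (by linarith)] at hS
        show Real.sin (π*S) * relu (y - π*(1-S)/ω) = 0
        have he : y - π*(1-S)/ω = (ω*y - π*(1-S))/ω := by field_simp
        have : y - π*(1-S)/ω ≤ 0 := by
          rw [he]
          apply div_nonpos_of_nonpos_of_nonneg ?_ hω.le
          nlinarith [hS.2, hπu]
        rw [relu_of_nonpos this, mul_zero]
      rw [intervalIntegral.integral_congr h5]
      simp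
    have eA : (∫ S in (1-u)..(1:ℝ), Real.sin (π*S) * relu (y - π*(1-S)/ω))
        = ∫ S in (1-u)..(1:ℝ), Real.sin (π*S) * ((y - π/ω) + (π/ω)*S) := by
      apply intervalIntegral.integral_congr
      intro S hS
      rw [Set.uIcc_of_le (by linarith)] at hS
      show Real.sin (π*S) * relu (y - π*(1-S)/ω) = _
      have he : y - π*(1-S)/ω = (ω*y - π*(1-S))/ω := by field_simp
      have : 0 ≤ y - π*(1-S)/ω := by
        rw [he]
        apply div_nonneg ?_ hω.le
        nlinarith [hS.1, hπu]
      rw [relu_of_nonneg this]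
      ring
    rw [eA, eB, zero_add, integral_sin_linear]
    have h4 : π*(1-u) = π - π*u := by ring
    rw [h4, Real.cos_pi_sub, Real.sin_pi_sub, hπu]
    have h5 : (y - π/ω) + (π/ω)*(1-u) = y - π/ω*u := by ring
    rw [h5, hcu]
    simp [Real.cos_pi]
    field_simp
  rw [J0, J1, J2]
  field_simp
  ring

lemma R4_zero_left {ω S t : ℝ} (hω : 0 < ω) (ht : t ≤ 0) (hS0 : 0 ≤ S) (hS1 : S ≤ 1) :
    R4 ω S t = 0 := by
  have hc : 0 < π/ω := by positivity
  have h3 : 0 ≤ π*S/ω := by positivity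
  have h4 : 0 ≤ π*(1-S)/ω := div_nonneg (mul_nonneg pi_pos.le (by linarith)) hω.le
  unfold R4
  rw [relu_of_nonpos ht, relu_of_nonpos (by linarith), relu_of_nonpos (by linarith),
    relu_of_nonpos (by linarith)]
  ring

lemma R4_zero_right {ω S t : ℝ} (hω : 0 < ω) (ht : π/ω ≤ t) (hS0 : 0 ≤ S) (hS1 : S ≤ 1) :
    R4 ω S t = 0 := by
  have hc : 0 < π/ω := by positivity
  have htω : π ≤ t*ω := by
    have := (div_le_iff₀ hω).mp ht
    linarith
  have h3 : 0 ≤ t - π*S/ω := by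
    rw [show t - π*S/ω = (t*ω - π*S)/ω by field_simp]
    apply div_nonneg ?_ hω.le
    nlinarith [mul_nonneg pi_pos.le (show (0:ℝ) ≤ 1 - S by linarith)]
  have h4 : 0 ≤ t - π*(1-S)/ω := by
    rw [show t - π*(1-S)/ω = (t*ω - π*(1-S))/ω by field_simp]
    apply div_nonneg ?_ hω.le
    nlinarith [mul_nonneg pi_pos.le hS0]
  unfold R4
  rw [relu_of_nonneg (by linarith), relu_of_nonneg (by linarith), relu_of_nonneg h3,
    relu_of_nonneg h4]
  ring

lemma continuous_R4 (ω a : ℝ) : Continuous (fun S : ℝ => R4 ω S a) := by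
  unfold R4
  exact ((continuous_const.add continuous_const).sub
    (continuous_relu.comp (by continuity))).sub (continuous_relu.comp (by continuity))

lemma continuous_gammaSin (ω t : ℝ) : Continuous (fun S => gammaSin ω S t) := by
  unfold gammaSin
  exact (continuous_const.mul (Real.continuous_sin.comp (by continuity))).mul
    ((continuous_R4 ω t).sub (continuous_R4 ω (t - π/ω)))

lemma integral_gammaSin {ω : ℝ} (hω : 0 < ω) (y : ℝ) :
    ∫ S in (0:ℝ)..1, gammaSin ω S y
      = if 0 ≤ y ∧ y ≤ 2*(π/ω) then Real.sin (ω*y) else 0 := by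
  have hc : 0 < π/ω := by positivity
  split_ifs with h
  · obtain ⟨h0, h2⟩ := h
    rcases le_or_gt y (π/ω) with h1 | h1
    · have e0 : ∀ S ∈ Set.uIcc (0:ℝ) 1, gammaSin ω S y
          = π*ω/2 * Real.sin (π*S) * R4 ω S y := by
        intro S hS
        rw [Set.uIcc_of_le zero_le_one] at hS
        show gammaSin ω S y = _
        unfold gammaSin
        rw [R4_zero_left (t := y - π/ω) hω (by linarith) hS.1 hS.2]
        ring
      rw [intervalIntegral.integral_congr e0, integral_sin_R4 hω h0 h1]
    · have e0 : ∀ S ∈ Set.uIcc (0:ℝ) 1, gammaSin ω S y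
          = -(π*ω/2 * Real.sin (π*S) * R4 ω S (y - π/ω)) := by
        intro S hS
        rw [Set.uIcc_of_le zero_le_one] at hS
        show gammaSin ω S y = _
        unfold gammaSin
        rw [R4_zero_right (t := y) hω h1.le hS.1 hS.2]
        ring
      rw [intervalIntegral.integral_congr e0, intervalIntegral.integral_neg,
        integral_sin_R4 hω (by linarith) (by linarith),
        show ω*(y - π/ω) = ω*y - π by field_simp, Real.sin_sub_pi]
      simp
  · rcases not_and_or.mp h with h | h <;> push_neg at h
    · have e0 : ∀ S ∈ Set.uIcc (0:ℝ) 1, gammaSin ω S y = 0 := by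
        intro S hS
        rw [Set.uIcc_of_le zero_le_one] at hS
        show gammaSin ω S y = 0
        unfold gammaSin
        rw [R4_zero_left (t := y) hω h.le hS.1 hS.2, R4_zero_left (t := y - π/ω) hω (by linarith) hS.1 hS.2]
        ring
      rw [intervalIntegral.integral_congr e0]
      simp
    · have e0 : ∀ S ∈ Set.uIcc (0:ℝ) 1, gammaSin ω S y = 0 := by
        intro S hS
        rw [Set.uIcc_of_le zero_le_one] at hS
        show gammaSin ω S y = 0
        unfold gammaSin
        rw [R4_zero_right (t := y) hω (by linarith) hS.1 hS.2,
          R4_zero_right (t := y - π/ω) hω (by linarith) hS.1 hS.2]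
        ring
      rw [intervalIntegral.integral_congr e0]
      simp

lemma sum_indicator_cos {ω : ℝ} (hω : 0 < ω) (n : ℕ) {y : ℝ} (h0 : 0 ≤ y)
    (h1 : y ≤ (2*(n:ℝ)+1)*(π/ω)) :
    ∑ i ∈ Finset.Icc (-(n:ℤ) - 1) (n:ℤ),
      (if 0 ≤ y - 2*π*(i:ℝ)/ω + π/(2*ω) ∧ y - 2*π*(i:ℝ)/ω + π/(2*ω) ≤ 2*(π/ω)
        then Real.sin (ω*(y - 2*π*(i:ℝ)/ω + π/(2*ω))) else 0)
      = Real.cos (ω*y) := by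
  have hπ : (0:ℝ) < π := pi_pos
  have hωne : ω ≠ 0 := ne_of_gt hω
  have h2π : (0:ℝ) < 2*π := by linarith
  set j : ℤ := ⌊(y*ω + π/2)/(2*π)⌋ with hj
  have hj1 : (j:ℝ)*(2*π) ≤ y*ω + π/2 := (le_div_iff₀ h2π).mp (Int.floor_le _)
  have hj2 : y*ω + π/2 < ((j:ℝ)+1)*(2*π) := (div_lt_iff₀ h2π).mp (Int.lt_floor_add_one _)
  -- argument rewrite helper
  have harg : ∀ i : ℤ, y - 2*π*(i:ℝ)/ω + π/(2*ω) = (y*ω + π/2 - (i:ℝ)*(2*π))/ω := by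
    intro i; field_simp; ring
  have hmem : j ∈ Finset.Icc (-(n:ℤ) - 1) (n:ℤ) := by
    rw [Finset.mem_Icc]
    constructor
    · have : (0:ℤ) ≤ j := by
        rw [hj]
        apply Int.le_floor.mpr
        push_cast
        positivity
      omega
    · have hlt : (j:ℝ) < (n:ℝ) + 1 := by
        have h3 : y*ω ≤ (2*(n:ℝ)+1)*π := by
          have := mul_le_mul_of_nonneg_right h1 hω.le
          calc y*ω ≤ (2*(n:ℝ)+1)*(π/ω)*ω := this
          _ = (2*(n:ℝ)+1)*π := by field_simp
        nlinarith [hj1]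
      exact_mod_cast Int.lt_add_one_iff.mp (by exact_mod_cast hlt)
  rw [Finset.sum_eq_single_of_mem j hmem]
  · -- main term
    have hc1 : 0 ≤ y - 2*π*(j:ℝ)/ω + π/(2*ω) := by
      rw [harg]; apply div_nonneg ?_ hω.le; linarith
    have hc2 : y - 2*π*(j:ℝ)/ω + π/(2*ω) ≤ 2*(π/ω) := by
      rw [harg, show 2*(π/ω) = (2*π)/ω by ring, div_le_div_iff_of_pos_right hω]
      linarith
    rw [if_pos ⟨hc1, hc2⟩,
      show ω*(y - 2*π*(j:ℝ)/ω + π/(2*ω)) = (ω*y - (j:ℤ)*(2*π)) + π/2 by field_simp,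
      Real.sin_add_pi_div_two, Real.cos_sub_int_mul_two_pi]
  · -- other terms vanish
    intro i _ hij
    rcases lt_or_gt_of_ne hij with hlt | hgt
    · -- i ≤ j - 1 : argument ≥ 2π/ω, nonzero only at equality where sin = 0
      have hi : (i:ℝ) ≤ (j:ℝ) - 1 := by
        have : i ≤ j - 1 := by omega
        exact_mod_cast this
      have hge : 2*(π/ω) ≤ y - 2*π*(i:ℝ)/ω + π/(2*ω) := by
        rw [harg, show 2*(π/ω) = (2*π)/ω by ring, div_le_div_iff_of_pos_right hω]
        nlinarith [hj1]
      split_ifs with hcond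
      · have heq : y - 2*π*(i:ℝ)/ω + π/(2*ω) = 2*(π/ω) := le_antisymm hcond.2 hge
        rw [heq, show ω*(2*(π/ω)) = 2*π by field_simp, Real.sin_two_pi]
      · rfl
    · -- i ≥ j + 1 : argument < 0
      have hi : (j:ℝ) + 1 ≤ (i:ℝ) := by exact_mod_cast hgt
      have hneg : y - 2*π*(i:ℝ)/ω + π/(2*ω) < 0 := by
        rw [harg, show (0:ℝ) = 0/ω by simp, div_lt_div_iff_of_pos_right hω]
        nlinarith [hj2]
      rw [if_neg]
      push_neg
      intro h; linarith

lemma tri_zero_of_nonpos {α β t : ℝ} (h : t ≤ 0) (hα : 0 < α) : tri α β t = 0 := by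
  unfold tri
  rcases eq_or_lt_of_le h with h | h
  · rw [if_pos ⟨h.ge, by linarith⟩, h, mul_zero]
  · rw [if_neg (by rintro ⟨h1, -⟩; linarith), if_neg (by rintro ⟨h1, -⟩; linarith)]

lemma tri_zero_of_ge {α β t : ℝ} (h : 2*α ≤ t) (hα : 0 < α) : tri α β t = 0 := by
  unfold tri
  rcases eq_or_lt_of_le h with h | h
  · rw [if_neg (by rintro ⟨-, h2⟩; linarith), if_pos ⟨by linarith, by linarith⟩, ← h]
    ring
  · rw [if_neg (by rintro ⟨-, h2⟩; linarith), if_neg (by rintro ⟨-, h2⟩; linarith)]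

lemma triWave_eq {α β : ℝ} (hα : 0 < α) {k : ℕ} (hk : 1 ≤ k) {x : ℝ}
    (hx1 : -(2*α*k) ≤ x) (hx2 : x ≤ 2*α*k) :
    ∃ m : ℤ, 0 ≤ x - 2*α*m ∧ x - 2*α*m ≤ 2*α ∧ triWave k α β x = tri α β (x - 2*α*m) := by
  set m : ℤ := min ⌊x/(2*α)⌋ ((k:ℤ) - 1) with hm
  have h2α : (0:ℝ) < 2*α := by linarith
  have hfl : (⌊x/(2*α)⌋ : ℝ) ≤ x/(2*α) := Int.floor_le _
  have hfl2 : x/(2*α) < (⌊x/(2*α)⌋ : ℝ) + 1 := Int.lt_floor_add_one _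
  have hs0 : 0 ≤ x - 2*α*m := by
    have hm' : (m:ℝ) ≤ x/(2*α) := by
      have : (m:ℝ) ≤ (⌊x/(2*α)⌋ : ℝ) := by exact_mod_cast min_le_left _ _
      linarith
    nlinarith [(le_div_iff₀ h2α).mp hm']
  have hs2 : x - 2*α*m ≤ 2*α := by
    rcases min_cases ⌊x/(2*α)⌋ ((k:ℤ) - 1) with ⟨he, -⟩ | ⟨he, hlt⟩
    · rw [hm, he]
      nlinarith [(div_lt_iff₀ h2α).mp hfl2]
    · -- floor > k-1, so floor ≥ k, so x ≥ 2αk, so x = 2αk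
      have hkfl : (k:ℤ) ≤ ⌊x/(2*α)⌋ := by omega
      have : (k:ℝ) ≤ x/(2*α) := by
        calc (k:ℝ) = ((k:ℤ):ℝ) := by push_cast; ring
        _ ≤ (⌊x/(2*α)⌋:ℝ) := by exact_mod_cast hkfl
        _ ≤ _ := hfl
      have hxk : x = 2*α*k := le_antisymm hx2 (by nlinarith [(le_div_iff₀ h2α).mp this])
      rw [hm, he, hxk]
      push_cast
      nlinarith
  refine ⟨m, hs0, hs2, ?_⟩
  have hmlb : -(k:ℤ) ≤ m := by
    have : -(k:ℤ) ≤ ⌊x/(2*α)⌋ := by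
      apply Int.le_floor.mpr
      push_cast
      rw [le_div_iff₀ h2α]
      nlinarith
    omega
  have hmem : m + 1 ∈ Finset.Icc (-(k:ℤ) + 1) (k:ℤ) := by
    rw [Finset.mem_Icc]
    constructor
    · omega
    · have := min_le_right ⌊x/(2*α)⌋ ((k:ℤ) - 1); omega
  unfold triWave
  rw [Finset.sum_eq_single_of_mem (m+1) hmem]
  · norm_num
  · intro i hi hne
    rcases lt_or_gt_of_ne hne with hlt | hgt
    · -- i ≤ m : arg ≥ s + 2α ≥ 2α
      apply tri_zero_of_ge ?_ hα
      have : (i:ℝ) ≤ (m:ℝ) := by exact_mod_cast Int.lt_add_one_iff.mp hlt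
      nlinarith
    · -- i ≥ m + 2 : arg ≤ s - 2α ≤ 0
      apply tri_zero_of_nonpos ?_ hα
      have : (m:ℝ) + 2 ≤ (i:ℝ) := by exact_mod_cast (by omega : m + 2 ≤ i)
      nlinarith

lemma integral_gammaCos {ω : ℝ} (hω : 0 < ω) (n : ℕ) {y : ℝ} (h0 : 0 ≤ y)
    (h1 : y ≤ (2*(n:ℝ)+1)*(π/ω)) :
    ∫ S in (0:ℝ)..1, gammaCos n ω S y = Real.cos (ω*y) := by
  unfold gammaCos
  rw [intervalIntegral.integral_finset_sum]
  · rw [Finset.sum_congr rfl (fun i _ => integral_gammaSin hω _)]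
    exact sum_indicator_cos hω n h0 h1
  · intro i _
    exact (continuous_gammaSin ω _).intervalIntegrable 0 1


/-- **Frequency multiplication (deep cosine lemma).** Fix `β > 1`, `ω > 1`, `r > 0`, set
`α = (2n+1)π/(βω)` and `k = ⌈(r + π/(βω))/(2α)⌉`. Then for every `θ ∈ [-π, π]` and
`t ∈ [-r, r]`, with `S ~ Unif[0,1]`,
`𝔼_S[Γ^cos_n(T_k(t + θ/(βω); α, β); S, ω)] = cos(βωt + θ)`. -/
theorem deep_cosine (β ω : ℝ) (hβ : 1 < β) (hω : 1 < ω) (n : ℕ) (r : ℝ) (hr : 0 < r)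
    (α : ℝ) (hα : α = (2 * (n : ℝ) + 1) * π / (β * ω))
    (k : ℕ) (hk : k = ⌈(r + π / (β * ω)) / (2 * α)⌉₊)
    (θ t : ℝ) (hθ : θ ∈ Set.Icc (-π) π) (ht : t ∈ Set.Icc (-r) r) :
    ∫ S in (0 : ℝ)..1, gammaCos n ω S (triWave k α β (t + θ / (β * ω))) =
      Real.cos (β * ω * t + θ) := by
  obtain ⟨hθ1, hθ2⟩ := hθ
  obtain ⟨ht1, ht2⟩ := ht
  have hω0 : (0:ℝ) < ω := by linarith
  have hβ0 : (0:ℝ) < β := by linarith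
  have hβω : (0:ℝ) < β*ω := by positivity
  have hπ : (0:ℝ) < π := pi_pos
  have hα0 : (0:ℝ) < α := by rw [hα]; positivity
  have hαβω : α*(β*ω) = (2*(n:ℝ)+1)*π := by rw [hα]; field_simp
  have hαβ : α*β = (2*(n:ℝ)+1)*(π/ω) := by
    field_simp
    linear_combination hαβω
  obtain ⟨x, hx⟩ : ∃ x : ℝ, x = t + θ/(β*ω) := ⟨_, rfl⟩
  rw [← hx]
  have hθx : β*ω*x = β*ω*t + θ := by rw [hx]; field_simp
  have hk1 : 1 ≤ k := by
    rw [hk]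
    apply Nat.one_le_ceil_iff.mpr
    positivity
  have hxb : |x| ≤ r + π/(β*ω) := by
    have h5 : |θ/(β*ω)| ≤ π/(β*ω) := by
      rw [abs_div, abs_of_pos hβω]
      gcongr
      exact abs_le.mpr ⟨hθ1, hθ2⟩
    calc |x| = |t + θ/(β*ω)| := by rw [hx]
    _ ≤ |t| + |θ/(β*ω)| := abs_add_le _ _
    _ ≤ r + π/(β*ω) := add_le_add (abs_le.mpr ⟨ht1, ht2⟩) h5
  have hkx : r + π/(β*ω) ≤ 2*α*k := by
    have h6 := Nat.le_ceil ((r + π/(β*ω))/(2*α))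
    rw [← hk] at h6
    calc r + π/(β*ω) = ((r + π/(β*ω))/(2*α))*(2*α) := by field_simp
    _ ≤ (k:ℝ)*(2*α) := mul_le_mul_of_nonneg_right h6 (by positivity)
    _ = 2*α*k := by ring
  obtain ⟨hxl, hxr⟩ := abs_le.mp hxb
  obtain ⟨m, hs0, hs2, hTW⟩ := triWave_eq (β := β) hα0 hk1 (x := x)
    (by linarith) (by linarith)
  rw [hTW]
  obtain ⟨s, hs⟩ : ∃ s : ℝ, s = x - 2*α*(m:ℝ) := ⟨_, rfl⟩
  rw [← hs] at hs0 hs2 ⊢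
  unfold tri
  split_ifs with hcase1 hcase2
  · have hy0 : 0 ≤ β*s := mul_nonneg hβ0.le hcase1.1
    have hy1 : β*s ≤ (2*(n:ℝ)+1)*(π/ω) := by nlinarith [hcase1.2]
    rw [integral_gammaCos hω0 n hy0 hy1]
    rw [show ω*(β*s) = (β*ω*t + θ) - (((2*(n:ℤ)+1)*m : ℤ):ℝ)*(2*π) by
      push_cast
      rw [hs]
      linear_combination hθx - 2*(m:ℝ)*hαβω]
    rw [Real.cos_sub_int_mul_two_pi]
  · have hy0 : 0 ≤ 2*α*β - β*s := by nlinarith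
    have hy1 : 2*α*β - β*s ≤ (2*(n:ℝ)+1)*(π/ω) := by nlinarith [hcase2.1]
    rw [integral_gammaCos hω0 n hy0 hy1]
    rw [show ω*(2*α*β - β*s) = -((β*ω*t + θ) - (((2*(n:ℤ)+1)*(m+1) : ℤ):ℝ)*(2*π)) by
      push_cast
      rw [hs]
      linear_combination 2*((m:ℝ)+1)*hαβω - hθx]
    rw [Real.cos_neg, Real.cos_sub_int_mul_two_pi]
  · exfalso
    rcases le_or_gt s α with h | h
    · exact hcase1 ⟨hs0, h⟩
    · exact hcase2 ⟨h, hs2⟩
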